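/- Let p be a prime, n ≥ 1, T ∈ GL(n, ℚ_p) and a ∈ ℚ_p^n \ {0} with ‖T^{-1}(a)‖_p ≠ 1. Then the map T̄_a : S_n → S_n, T̄_a(x) = ‖a + T(x)‖_p · (a + T(x)), is continuous and injective. -/

import Mathlib

open scoped MatrixGroups

/-- The real number `r`, assumed to be an integer power of `p`, interpreted as the
corresponding scalar in `ℚ_p` (junk value otherwise). -/
noncomputable def realToPadic (p : ℕ) [Fact p.Prime] (r : ℝ) : ℚ_[p] :=
  (p : ℚ_[p]) ^ ⌊Real.logb p r⌋

/-- The `affine` map `T̄_a` on the `p`-adic unit sphere: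
`T̄_a(x) = ‖a + T(x)‖_p ⬝ (a + T(x))`. -/
noncomputable def affineSphereMap (p : ℕ) [Fact p.Prime] {n : ℕ}
    (T : Matrix (Fin n) (Fin n) ℚ_[p]) (a : Fin n → ℚ_[p]) (y : Fin n → ℚ_[p]) :
    Fin n → ℚ_[p] :=
  realToPadic p ‖a + T.mulVec y‖ • (a + T.mulVec y)

instance piUltra (p : ℕ) [Fact p.Prime] (n : ℕ) : IsUltrametricDist (Fin n → ℚ_[p]) := by
  apply IsUltrametricDist.isUltrametricDist_of_forall_nnnorm_add_le_max_nnnorm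
  intro x y
  rw [Pi.nnnorm_def]
  apply Finset.sup_le
  intro i _
  calc ‖(x + y) i‖₊ = ‖x i + y i‖₊ := rfl
    _ ≤ max ‖x i‖₊ ‖y i‖₊ := IsUltrametricDist.nnnorm_add_le_max _ _
    _ ≤ max ‖x‖₊ ‖y‖₊ :=
      max_le_max (nnnorm_le_pi_nnnorm x i) (nnnorm_le_pi_nnnorm y i)

lemma exists_zpow_norm (p : ℕ) [hp : Fact p.Prime] {n : ℕ} {v : Fin n → ℚ_[p]} (hv : v ≠ 0) :
    ∃ m : ℤ, ‖v‖ = (p : ℝ) ^ m := by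
  have hne : (Finset.univ : Finset (Fin n)).Nonempty := by
    by_contra h
    rw [Finset.not_nonempty_iff_eq_empty] at h
    apply hv
    funext i
    exact absurd (Finset.mem_univ i) (by simp [h])
  obtain ⟨i, _, hi⟩ := Finset.exists_mem_eq_sup (Finset.univ : Finset (Fin n)) hne
    fun i => ‖v i‖₊
  have hnorm : ‖v‖ = ‖v i‖ := by
    rw [← coe_nnnorm, Pi.nnnorm_def, hi, coe_nnnorm]
  have hvi : v i ≠ 0 := by
    intro h
    apply hv
    have h0 : ‖v‖ = 0 := by rw [hnorm, h, norm_zero]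
    exact norm_eq_zero.mp h0
  exact ⟨-(v i).valuation, by rw [hnorm, Padic.norm_eq_zpow_neg_valuation hvi]⟩

lemma realToPadic_zpow (p : ℕ) [hp : Fact p.Prime] (m : ℤ) :
    realToPadic p ((p : ℝ) ^ m) = (p : ℚ_[p]) ^ m := by
  have hp1 : (1 : ℝ) < p := by exact_mod_cast hp.out.one_lt
  have hlog : Real.logb p ((p : ℝ) ^ m) = m := by
    rw [Real.logb, Real.log_zpow, mul_div_assoc, div_self (Real.log_ne_zero_of_pos_of_ne_one
      (by linarith) (by linarith)), mul_one]
  rw [realToPadic, hlog, Int.floor_intCast]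

theorem stmt13 (p : ℕ) [Fact p.Prime] (n : ℕ) (hn : 1 ≤ n) (T : GL (Fin n) ℚ_[p])
    (a : Fin n → ℚ_[p]) (ha : a ≠ 0)
    (hnorm : ‖((T⁻¹ : GL (Fin n) ℚ_[p]) : Matrix (Fin n) (Fin n) ℚ_[p]).mulVec a‖ ≠ 1) :
    ContinuousOn (affineSphereMap p (T : Matrix (Fin n) (Fin n) ℚ_[p]) a)
        (Metric.sphere (0 : Fin n → ℚ_[p]) 1) ∧
      Set.InjOn (affineSphereMap p (T : Matrix (Fin n) (Fin n) ℚ_[p]) a)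
        (Metric.sphere (0 : Fin n → ℚ_[p]) 1) := by
  have hp := (Fact.out : p.Prime)
  have hp1 : (1 : ℝ) < p := by exact_mod_cast hp.one_lt
  set Tm : Matrix (Fin n) (Fin n) ℚ_[p] := (T : Matrix (Fin n) (Fin n) ℚ_[p]) with hTm
  set Ti : Matrix (Fin n) (Fin n) ℚ_[p] :=
    ((T⁻¹ : GL (Fin n) ℚ_[p]) : Matrix (Fin n) (Fin n) ℚ_[p]) with hTi
  set b : Fin n → ℚ_[p] := Ti.mulVec a with hb
  have hTiT : Ti * Tm = 1 := by
    rw [hTi, hTm]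
    exact_mod_cast T.inv_mul
  have hTiTm : ∀ x : Fin n → ℚ_[p], Ti.mulVec (Tm.mulVec x) = x := by
    intro x
    rw [Matrix.mulVec_mulVec, hTiT, Matrix.one_mulVec]
  -- membership in sphere means norm one
  have hmem : ∀ x ∈ Metric.sphere (0 : Fin n → ℚ_[p]) 1, ‖x‖ = 1 := by
    intro x hx
    simpa using hx
  -- nonvanishing on the sphere
  have hnz : ∀ x ∈ Metric.sphere (0 : Fin n → ℚ_[p]) 1, a + Tm.mulVec x ≠ 0 := by
    intro x hx h
    apply hnorm
    have hax : a = -Tm.mulVec x := by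
      rw [eq_neg_iff_add_eq_zero]; exact h
    have : Ti.mulVec a = -x := by
      rw [hax, Matrix.mulVec_neg, hTiTm]
    rw [hb, this, norm_neg]
    exact hmem x hx
  -- decomposition of T⁻¹ (a + Tx)
  have hdecomp : ∀ x : Fin n → ℚ_[p], Ti.mulVec (a + Tm.mulVec x) = b + x := by
    intro x
    rw [Matrix.mulVec_add, hTiTm, hb]
  -- continuity of y ↦ a + T y
  have hgc : Continuous fun y : Fin n → ℚ_[p] => a + Tm.mulVec y := by
    have : Continuous fun y : Fin n → ℚ_[p] => Tm.mulVec y :=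
      (Matrix.mulVecLin Tm).continuous_of_finiteDimensional
    exact continuous_const.add this
  constructor
  · -- Continuity
    intro x hx
    apply ContinuousAt.continuousWithinAt
    set v : Fin n → ℚ_[p] := a + Tm.mulVec x with hv
    have hvne : v ≠ 0 := hnz x hx
    have hvpos : 0 < ‖v‖ := norm_pos_iff.mpr hvne
    have hU : ∀ᶠ y in nhds x, ‖a + Tm.mulVec y‖ = ‖v‖ := by
      have hUopen : IsOpen ((fun y => a + Tm.mulVec y) ⁻¹' Metric.ball v ‖v‖) :=
        Metric.isOpen_ball.preimage hgc
      have hxU : x ∈ (fun y => a + Tm.mulVec y) ⁻¹' Metric.ball v ‖v‖ := by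
        simp [Metric.mem_ball, hvpos, ← hv]
      filter_upwards [hUopen.mem_nhds hxU] with y hy
      have hlt : ‖a + Tm.mulVec y - v‖ < ‖v‖ := by
        simpa [Metric.mem_ball, dist_eq_norm] using hy
      have hne : ‖a + Tm.mulVec y - v‖ ≠ ‖v‖ := ne_of_lt hlt
      calc ‖a + Tm.mulVec y‖ = ‖(a + Tm.mulVec y - v) + v‖ := by ring_nf
        _ = max ‖a + Tm.mulVec y - v‖ ‖v‖ :=
            IsUltrametricDist.norm_add_eq_max_of_norm_ne_norm hne
        _ = ‖v‖ := max_eq_right hlt.le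
    have hcongr : (fun y => realToPadic p ‖v‖ • (a + Tm.mulVec y)) =ᶠ[nhds x]
        affineSphereMap p Tm a := by
      filter_upwards [hU] with y hy
      rw [affineSphereMap, hy]
    exact ContinuousAt.congr ((show Continuous (fun y => realToPadic p ‖v‖ • (a + Tm.mulVec y)) from by fun_prop).continuousAt) hcongr
  · -- Injectivity
    intro x hx y hy hxy
    set vx : Fin n → ℚ_[p] := a + Tm.mulVec x with hvx
    set vy : Fin n → ℚ_[p] := a + Tm.mulVec y with hvy
    obtain ⟨mx, hmx⟩ := exists_zpow_norm p (hnz x hx)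
    obtain ⟨my, hmy⟩ := exists_zpow_norm p (hnz y hy)
    set cx : ℚ_[p] := (p : ℚ_[p]) ^ mx with hcx
    set cy : ℚ_[p] := (p : ℚ_[p]) ^ my with hcy
    have hpne : (p : ℚ_[p]) ≠ 0 := by exact_mod_cast hp.ne_zero
    have hcxne : cx ≠ 0 := zpow_ne_zero _ hpne
    have hcyne : cy ≠ 0 := zpow_ne_zero _ hpne
    have hxy' : cx • vx = cy • vy := by
      have h1 : realToPadic p ‖vx‖ = cx := by rw [hmx, realToPadic_zpow]
      have h2 : realToPadic p ‖vy‖ = cy := by rw [hmy, realToPadic_zpow]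
      rw [← h1, ← h2]
      simpa [affineSphereMap, ← hvx, ← hvy] using hxy
    have hmain : cx • (b + x) = cy • (b + y) := by
      have := congrArg Ti.mulVec hxy'
      rwa [Matrix.mulVec_smul, Matrix.mulVec_smul, hdecomp, hdecomp] at this
    by_cases hm : mx = my
    · have hcc : cx = cy := by rw [hcx, hcy, hm]
      rw [hcc] at hmain
      have := smul_right_injective (Fin n → ℚ_[p]) hcyne hmain
      have hbxy : b + x = b + y := this
      exact add_left_cancel hbxy
    · exfalso
      apply hnorm
      have hncx : ‖cx‖ = (p : ℝ) ^ (-mx) := Padic.norm_p_zpow mx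
      have hncy : ‖cy‖ = (p : ℝ) ^ (-my) := Padic.norm_p_zpow my
      have hnne : ‖cx‖ ≠ ‖cy‖ := by
        rw [hncx, hncy]
        intro h
        exact hm (neg_injective (zpow_right_injective₀ (by linarith) (by linarith) h))
      have hkey : (cx - cy) • b = cy • y - cx • x := by
        have : cx • b + cx • x = cy • b + cy • y := by
          rw [← smul_add, ← smul_add]; exact hmain
        rw [sub_smul, sub_eq_sub_iff_add_eq_add]
        rw [add_comm (cy • y) (cy • b)]
        exact this
      -- norms of both sides
      have hns : ‖x‖ = 1 := hmem x hx
      have hnt : ‖y‖ = 1 := hmem y hy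
      have hsub : ‖cx - cy‖ = max ‖cx‖ ‖cy‖ := by
        rw [sub_eq_add_neg, Padic.add_eq_max_of_ne (by rwa [norm_neg]), norm_neg]
      have hrhs : ‖cy • y - cx • x‖ = max ‖cy‖ ‖cx‖ := by
        have h1 : ‖cy • y‖ = ‖cy‖ := by rw [norm_smul, hnt, mul_one]
        have h2 : ‖-(cx • x)‖ = ‖cx‖ := by rw [norm_neg, norm_smul, hns, mul_one]
        rw [sub_eq_add_neg,
          IsUltrametricDist.norm_add_eq_max_of_norm_ne_norm (by rw [h1, h2]; exact hnne.symm),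
          h1, h2]
      have hmaxpos : 0 < max ‖cx‖ ‖cy‖ := by
        apply lt_max_of_lt_left
        exact norm_pos_iff.mpr hcxne
      have heq : ‖(cx - cy) • b‖ = ‖cy • y - cx • x‖ := by rw [hkey]
      rw [norm_smul, hsub, hrhs, max_comm ‖cy‖ ‖cx‖] at heq
      have h1 : max ‖cx‖ ‖cy‖ * ‖b‖ = max ‖cx‖ ‖cy‖ * 1 := by rw [mul_one]; exact heq
      exact mul_left_cancel₀ (ne_of_gt hmaxpos) h1
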